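/- arXiv:2312.05659 — 6 statements merged into one kernel-verified Lean document; each statement's English description precedes it below -/
import Mathlib

section
/- Let ε > 0, let Y ⊆ ℝ be a finite nonempty set of input labels, let g : ℝ × ℝ → ℝ be a loss such that g(·, y) is convex for every y ∈ Y, and let P be a prior on Y. Then for every ε-DP unbiased label randomizer M₀ on Y with finitely many output labels, there exists an ε-DP unbiased label randomizer M on Y with at most 2·|Y| distinct output labels such that G(M;P) ≤ G(M₀;P). In particular, the infimum of the noisy label loss over all ε-DP unbiased label randomizers with finitely many output labels is attained by a randomizer with at most 2·|Y| output labels. -/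
open Finset

lemma caratheodory_cost {ι V : Type*} [DecidableEq ι] [AddCommGroup V] [Module ℝ V]
    [FiniteDimensional ℝ V] (v : ι → V) (c : ι → ℝ) (s : Finset ι) :
    (∀ (l : ι → ℝ) (t : Finset ι), t ⊆ s → (∀ i ∉ t, l i = 0) →
      ∑ i ∈ t, l i • v i = 0 → (∃ i ∈ t, l i ≠ 0) → ∃ i ∈ t, l i < 0) →
    ∀ (w : ι → ℝ), (∀ i ∈ s, 0 ≤ w i) →
    ∃ (t : Finset ι) (w' : ι → ℝ), t ⊆ s ∧ t.card ≤ Module.finrank ℝ V ∧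
      (∀ i ∈ t, 0 ≤ w' i) ∧ ∑ i ∈ t, w' i • v i = ∑ i ∈ s, w i • v i ∧
      ∑ i ∈ t, w' i * c i ≤ ∑ i ∈ s, w i * c i := by
  induction s using Finset.strongInduction with
  | _ s ih =>
    intro Hmix w hw
    by_cases hcard : s.card ≤ Module.finrank ℝ V
    · exact ⟨s, w, subset_rfl, hcard, hw, rfl, le_rfl⟩
    -- the family (v i)_{i ∈ s} is linearly dependent
    · have hdep : ¬ LinearIndependent ℝ (fun i : (s : Finset ι) => v i) := by
        intro h
        exact hcard (by simpa [Fintype.card_coe] using h.fintype_card_le_finrank)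
      rw [Fintype.not_linearIndependent_iff] at hdep
      obtain ⟨gc, hgc, i0, hi0⟩ := hdep
      set l : ι → ℝ := fun i => if h : i ∈ s then gc ⟨i, h⟩ else 0 with hl
      have hlsupp : ∀ i ∉ s, l i = 0 := by intro i hi; simp [hl, hi]
      have hlsum : ∑ i ∈ s, l i • v i = 0 := by
        rw [← Finset.sum_attach s (fun i => l i • v i)]
        simpa [hl] using hgc
      have hlne : ∃ i ∈ s, l i ≠ 0 := ⟨i0, i0.2, by simpa [hl] using hi0⟩
      -- choose a direction d with nonpositive cost movement
      obtain ⟨d, hdsupp, hdsum, hdne, hdc⟩ :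
          ∃ d : ι → ℝ, (∀ i ∉ s, d i = 0) ∧ (∑ i ∈ s, d i • v i = 0) ∧
            (∃ i ∈ s, d i ≠ 0) ∧ ∑ i ∈ s, d i * c i ≤ 0 := by
        by_cases h : ∑ i ∈ s, l i * c i ≤ 0
        · exact ⟨l, hlsupp, hlsum, hlne, h⟩
        · refine ⟨-l, by intro i hi; simp [hlsupp i hi], by simp [hlsum], ?_, ?_⟩
          · obtain ⟨i, hi, hne⟩ := hlne; exact ⟨i, hi, by simpa using hne⟩
          · simp only [Pi.neg_apply, neg_mul, Finset.sum_neg_distrib]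
            linarith
      have hneg : ∃ i ∈ s, d i < 0 := Hmix d s subset_rfl hdsupp hdsum hdne
      set T : Finset ι := s.filter (fun i => d i < 0) with hT
      have hTne : T.Nonempty := by
        obtain ⟨i, hi, hdi⟩ := hneg; exact ⟨i, by simp [hT, hi, hdi]⟩
      set τ : ℝ := T.inf' hTne (fun i => w i / (-d i)) with hτ
      have hτ0 : 0 ≤ τ := by
        apply Finset.le_inf'
        intro i hi
        rw [hT, Finset.mem_filter] at hi
        exact div_nonneg (hw i hi.1) (by linarith [hi.2])
      obtain ⟨j, hjT, hjmin⟩ := Finset.exists_mem_eq_inf' hTne (fun i => w i / (-d i))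
      rw [hT, Finset.mem_filter] at hjT
      have hjs : j ∈ s := hjT.1
      have hdj : d j < 0 := hjT.2
      set w₁ : ι → ℝ := fun i => w i + τ * d i with hw₁def
      have hw₁j : w₁ j = 0 := by
        have hdj' : d j ≠ 0 := ne_of_lt hdj
        have hτj : τ = w j / (-d j) := hjmin
        simp only [hw₁def, hτj]
        rw [div_mul_eq_mul_div, div_neg, mul_div_assoc, div_self hdj', mul_one]
        ring
      have hw₁ : ∀ i ∈ s, 0 ≤ w₁ i := by
        intro i hi
        rcases le_or_gt 0 (d i) with h | h
        · have : 0 ≤ τ * d i := mul_nonneg hτ0 h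
          simp only [hw₁def]; linarith [hw i hi]
        · have hiT : i ∈ T := by simp [hT, hi, h]
          have hle : τ ≤ w i / (-d i) := Finset.inf'_le _ hiT
          have : τ * d i ≥ (w i / (-d i)) * d i :=
            mul_le_mul_of_nonpos_right hle (le_of_lt h)
          have heq : (w i / (-d i)) * d i = -w i := by
            have hdi : d i ≠ 0 := ne_of_lt h
            rw [div_mul_eq_mul_div, div_neg, mul_div_assoc, div_self hdi, mul_one]
          simp only [hw₁def]
          nlinarith
      -- sums with w₁ agree with sums with w
      have hsum₁ : ∑ i ∈ s, w₁ i • v i = ∑ i ∈ s, w i • v i := by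
        simp only [hw₁def, add_smul, Finset.sum_add_distrib, mul_smul]
        rw [← Finset.smul_sum, hdsum, smul_zero, add_zero]
      have hcost₁ : ∑ i ∈ s, w₁ i * c i ≤ ∑ i ∈ s, w i * c i := by
        simp only [hw₁def, add_mul, Finset.sum_add_distrib, mul_assoc]
        rw [← Finset.mul_sum]
        nlinarith
      -- apply induction hypothesis to s.erase j
      have hss : s.erase j ⊂ s := Finset.erase_ssubset hjs
      have Hmix' : ∀ (l : ι → ℝ) (t : Finset ι), t ⊆ s.erase j → (∀ i ∉ t, l i = 0) →
          ∑ i ∈ t, l i • v i = 0 → (∃ i ∈ t, l i ≠ 0) → ∃ i ∈ t, l i < 0 := by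
        intro l t ht; exact Hmix l t (ht.trans (Finset.erase_subset _ _))
      obtain ⟨t, w', htsub, htcard, hw'0, hw'sum, hw'cost⟩ :=
        ih (s.erase j) hss Hmix' w₁ (fun i hi => hw₁ i (Finset.mem_of_mem_erase hi))
      refine ⟨t, w', htsub.trans (Finset.erase_subset _ _), htcard, hw'0, ?_, ?_⟩
      · rw [hw'sum, ← hsum₁, ← Finset.add_sum_erase s (fun i => w₁ i • v i) hjs,
          hw₁j, zero_smul, zero_add]
      · calc ∑ i ∈ t, w' i * c i ≤ ∑ i ∈ s.erase j, w₁ i * c i := hw'cost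
          _ = ∑ i ∈ s, w₁ i * c i := by
              rw [← Finset.add_sum_erase s (fun i => w₁ i * c i) hjs, hw₁j, zero_mul, zero_add]
          _ ≤ _ := hcost₁



/-- For `ε > 0`, a finite nonempty label set `Y ⊆ ℝ`, a loss `g` convex in
its first argument, and a prior `P` on `Y`: for every `ε`-DP unbiased label randomizer
`M₀` with finitely many output labels, there is an `ε`-DP unbiased label randomizer `M`
with at most `2·|Y|` output labels whose noisy label loss w.r.t. `P` is no larger. -/
theorem stmt_1
    (ε : ℝ) (hε : 0 < ε)
    (Y : Finset ℝ) (hY : Y.Nonempty)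
    (g : ℝ → ℝ → ℝ)
    (hg : ∀ y ∈ Y, ConvexOn ℝ Set.univ (fun s => g s y))
    (P : ℝ → ℝ) (hP0 : ∀ y ∈ Y, 0 ≤ P y) (hP1 : ∑ y ∈ Y, P y = 1)
    (m₀ : ℕ) (yhat₀ : Fin m₀ → ℝ) (M₀ : ℝ → Fin m₀ → ℝ)
    (h₀nonneg : ∀ y ∈ Y, ∀ i, 0 ≤ M₀ y i)
    (h₀sum : ∀ y ∈ Y, ∑ i, M₀ y i = 1)
    (h₀dp : ∀ i, ∀ y ∈ Y, ∀ y' ∈ Y, M₀ y' i ≤ Real.exp ε * M₀ y i)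
    (h₀unbiased : ∀ y ∈ Y, ∑ i, M₀ y i * yhat₀ i = y) :
    ∃ (m : ℕ) (yhat : Fin m → ℝ) (M : ℝ → Fin m → ℝ),
      m ≤ 2 * Y.card ∧
      (∀ y ∈ Y, ∀ i, 0 ≤ M y i) ∧
      (∀ y ∈ Y, ∑ i, M y i = 1) ∧
      (∀ i, ∀ y ∈ Y, ∀ y' ∈ Y, M y' i ≤ Real.exp ε * M y i) ∧
      (∀ y ∈ Y, ∑ i, M y i * yhat i = y) ∧
      (∑ y ∈ Y, P y * ∑ i, M y i * g (yhat i) y) ≤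
        (∑ y ∈ Y, P y * ∑ i, M₀ y i * g (yhat₀ i) y) := by
  classical
  obtain ⟨y₀, hy₀⟩ := hY
  -- constraint space
  have hrank : Module.finrank ℝ ({x // x ∈ Y} → ℝ × ℝ) = 2 * Y.card := by
    rw [Module.finrank_pi_fintype]
    simp [Module.finrank_prod, Fintype.card_coe, mul_comm]
  set v : Fin m₀ → ({x // x ∈ Y} → ℝ × ℝ) :=
    fun i y => (M₀ y.1 i, M₀ y.1 i * yhat₀ i) with hv
  set c : Fin m₀ → ℝ := fun i => ∑ y ∈ Y, P y * (M₀ y i * g (yhat₀ i) y) with hc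
  set s₀ : Finset (Fin m₀) := Finset.univ.filter (fun i => M₀ y₀ i ≠ 0) with hs₀
  have hzero : ∀ i, i ∉ s₀ → ∀ y ∈ Y, M₀ y i = 0 := by
    intro i hi y hy
    have h0 : M₀ y₀ i = 0 := by
      by_contra h; exact hi (Finset.mem_filter.mpr ⟨Finset.mem_univ i, h⟩)
    have := h₀dp i y₀ hy₀ y hy
    rw [h0, mul_zero] at this
    exact le_antisymm this (h₀nonneg y hy i)
  have hpos : ∀ i ∈ s₀, ∀ y ∈ Y, 0 < M₀ y i := by
    intro i hi y hy
    have h0 : M₀ y₀ i ≠ 0 := (Finset.mem_filter.mp hi).2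
    rcases (h₀nonneg y hy i).lt_or_eq with h | h
    · exact h
    · exfalso; apply h0
      have := h₀dp i y hy y₀ hy₀
      rw [← h, mul_zero] at this
      exact le_antisymm this (h₀nonneg y₀ hy₀ i)
  -- evaluating component sums
  have key : ∀ (t : Finset (Fin m₀)) (u : Fin m₀ → ℝ) (y : ℝ) (hy : y ∈ Y),
      ((∑ i ∈ t, u i • v i) ⟨y, hy⟩).1 = ∑ i ∈ t, u i * M₀ y i ∧
      ((∑ i ∈ t, u i • v i) ⟨y, hy⟩).2 = ∑ i ∈ t, u i * (M₀ y i * yhat₀ i) := by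
    intro t u y hy
    constructor <;>
      simp [Finset.sum_apply, Prod.fst_sum, Prod.snd_sum, hv, smul_eq_mul]
  have Hmix : ∀ (l : Fin m₀ → ℝ) (t : Finset (Fin m₀)), t ⊆ s₀ → (∀ i ∉ t, l i = 0) →
      ∑ i ∈ t, l i • v i = 0 → (∃ i ∈ t, l i ≠ 0) → ∃ i ∈ t, l i < 0 := by
    intro l t hts hsupp hsum ⟨i₁, hi₁, hne⟩
    by_contra h
    push_neg at h
    have h1 : ∑ i ∈ t, l i * M₀ y₀ i = 0 := by
      rw [← (key t l y₀ hy₀).1, hsum]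
      simp
    have hall := (Finset.sum_eq_zero_iff_of_nonneg (fun i hi =>
      mul_nonneg (h i hi) (le_of_lt (hpos i (hts hi) y₀ hy₀)))).mp h1
    have := hall i₁ hi₁
    rcases mul_eq_zero.mp this with h' | h'
    · exact hne h'
    · exact (ne_of_gt (hpos i₁ (hts hi₁) y₀ hy₀)) h'
  obtain ⟨t, w', htsub, htcard, hw'0, hw'sum, hw'cost⟩ :=
    caratheodory_cost v c s₀ Hmix (fun _ => 1) (fun i _ => zero_le_one)
  -- extract componentwise consequences
  have hA : ∀ y ∈ Y, ∑ i ∈ t, w' i * M₀ y i = 1 := by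
    intro y hy
    rw [← (key t w' y hy).1, hw'sum, (key s₀ (fun _ => 1) y hy).1]
    simp only [one_mul]
    rw [Finset.sum_subset (Finset.subset_univ s₀) (fun i _ hi => hzero i hi y hy)]
    exact h₀sum y hy
  have hB : ∀ y ∈ Y, ∑ i ∈ t, w' i * (M₀ y i * yhat₀ i) = y := by
    intro y hy
    rw [← (key t w' y hy).2, hw'sum, (key s₀ (fun _ => 1) y hy).2]
    simp only [one_mul]
    rw [Finset.sum_subset (Finset.subset_univ s₀)
      (fun i _ hi => by rw [hzero i hi y hy, zero_mul])]
    exact h₀unbiased y hy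
  -- cost bound
  have hcostR : ∑ i ∈ s₀, (1:ℝ) * c i = ∑ y ∈ Y, P y * ∑ i, M₀ y i * g (yhat₀ i) y := by
    simp only [one_mul]
    rw [Finset.sum_subset (Finset.subset_univ s₀) (fun i _ hi => by
      simp only [hc]
      exact Finset.sum_eq_zero (fun y hy => by rw [hzero i hi y hy, zero_mul, mul_zero]))]
    simp only [hc]
    rw [Finset.sum_comm]
    exact Finset.sum_congr rfl (fun y hy => by rw [Finset.mul_sum])
  -- build the final randomizer
  refine ⟨t.card, fun k => yhat₀ ((t.equivFin.symm k : t) : Fin m₀),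
    fun y k => w' ((t.equivFin.symm k : t) : Fin m₀) * M₀ y ((t.equivFin.symm k : t) : Fin m₀),
    ?_, ?_, ?_, ?_, ?_, ?_⟩
  · rw [← hrank]; exact htcard
  · intro y hy k
    exact mul_nonneg (hw'0 _ (t.equivFin.symm k).2) (h₀nonneg y hy _)
  · intro y hy
    have hconv : ∑ k : Fin t.card, (fun i => w' i * M₀ y i) ((t.equivFin.symm k : t) : Fin m₀)
        = ∑ i ∈ t, w' i * M₀ y i := by
      rw [← Finset.sum_coe_sort t (fun i => w' i * M₀ y i)]
      exact Equiv.sum_comp t.equivFin.symm (fun x : ↥t => w' ↑x * M₀ y ↑x)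
    simpa [hA y hy] using hconv
  · intro k y hy y' hy'
    set i : Fin m₀ := ((t.equivFin.symm k : t) : Fin m₀) with hi
    have h1 := mul_le_mul_of_nonneg_left (h₀dp i y hy y' hy') (hw'0 i (t.equivFin.symm k).2)
    calc w' i * M₀ y' i ≤ w' i * (Real.exp ε * M₀ y i) := h1
      _ = Real.exp ε * (w' i * M₀ y i) := by ring
  · intro y hy
    have hconv : ∑ k : Fin t.card,
        (fun i => w' i * (M₀ y i * yhat₀ i)) ((t.equivFin.symm k : t) : Fin m₀)
        = ∑ i ∈ t, w' i * (M₀ y i * yhat₀ i) := by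
      rw [← Finset.sum_coe_sort t (fun i => w' i * (M₀ y i * yhat₀ i))]
      exact Equiv.sum_comp t.equivFin.symm (fun x : ↥t => w' ↑x * (M₀ y ↑x * yhat₀ ↑x))
    calc ∑ k : Fin t.card, (w' _ * M₀ y _) * yhat₀ _
        = ∑ i ∈ t, w' i * (M₀ y i * yhat₀ i) := by
          rw [← hconv]; exact Finset.sum_congr rfl (fun k _ => by ring)
      _ = y := hB y hy
  · calc ∑ y ∈ Y, P y * ∑ k : Fin t.card,
          (w' ((t.equivFin.symm k : t) : Fin m₀) * M₀ y ((t.equivFin.symm k : t) : Fin m₀)) *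
            g (yhat₀ ((t.equivFin.symm k : t) : Fin m₀)) y
        = ∑ i ∈ t, w' i * c i := by
          have hconv : ∀ y : ℝ, ∑ k : Fin t.card,
              (fun i => w' i * M₀ y i * g (yhat₀ i) y) ((t.equivFin.symm k : t) : Fin m₀)
              = ∑ i ∈ t, w' i * M₀ y i * g (yhat₀ i) y := by
            intro y
            rw [← Finset.sum_coe_sort t (fun i => w' i * M₀ y i * g (yhat₀ i) y)]
            exact Equiv.sum_comp t.equivFin.symm (fun x : ↥t => w' ↑x * M₀ y ↑x * g (yhat₀ ↑x) y)
          calc ∑ y ∈ Y, P y * ∑ k : Fin t.card,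
              (w' _ * M₀ y _) * g (yhat₀ _) y
              = ∑ y ∈ Y, ∑ i ∈ t, P y * (w' i * M₀ y i * g (yhat₀ i) y) := by
                refine Finset.sum_congr rfl (fun y hy => ?_)
                rw [← Finset.mul_sum, hconv y]
            _ = ∑ i ∈ t, ∑ y ∈ Y, P y * (w' i * M₀ y i * g (yhat₀ i) y) := Finset.sum_comm
            _ = ∑ i ∈ t, w' i * c i := by
                refine Finset.sum_congr rfl (fun i hi => ?_)
                simp only [hc]
                rw [Finset.mul_sum]
                exact Finset.sum_congr rfl (fun y hy => by ring)
      _ ≤ ∑ i ∈ s₀, (1:ℝ) * c i := hw'cost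
      _ = _ := hcostR
end

section
/- Let ε > 0, let Y ⊆ ℝ be a finite set of input labels with k = |Y| ≥ 2, let g : ℝ × ℝ → ℝ be a loss such that g(·, y) is convex for every y ∈ Y, and let P be a prior on Y. Then for every ε-DP label randomizer M⁰ on Y with finitely many output labels, there exists an ε-DP label randomizer M on Y with output labels ŷ_1, ..., ŷ_m such that: (1) G(M;P) ≤ G(M⁰;P); (2) the expected output is preserved: Σ_{j=1}^m M_{y→j}·ŷ_j equals the expected output of M⁰ on input y, for every y ∈ Y (in particular, if M⁰ is unbiased then M is unbiased); (3) m ≤ 2^k; (4) for each output index j, the column (M_{y→j})_{y∈Y} is a positive scalar multiple of a vector all of whose entries lie in {1, e^ε}, and these {1, e^ε}-valued vectors are pairwise distinct across the columns. -/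
lemma key_id (Y : Finset ℝ) (t : ℝ → ℝ) (e : ℝ) {y₀ : ℝ} (h : y₀ ∈ Y) :
    ∑ S ∈ Y.powerset, (∏ y ∈ S, t y) * (∏ y ∈ Y \ S, (1 - t y)) * (if y₀ ∈ S then e else 1)
      = 1 - t y₀ + t y₀ * e := by
  have h1 : ∀ S ∈ Y.powerset,
      (∏ y ∈ S, t y) * (∏ y ∈ Y \ S, (1 - t y)) * (if y₀ ∈ S then e else 1)
        = (∏ y ∈ S, (if y = y₀ then e else 1) * t y) * ∏ y ∈ Y \ S, (1 - t y) := by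
    intro S hS
    rw [Finset.prod_mul_distrib, Finset.prod_ite_eq' S y₀ (fun _ => e)]
    ring
  rw [Finset.sum_congr rfl h1, ← Finset.prod_add]
  rw [Finset.prod_eq_single_of_mem y₀ h]
  · simp; ring
  · intro b _ hb; simp [hb]

/-- For `ε > 0`, a finite label set `Y ⊆ ℝ` with `k = |Y| ≥ 2`, a loss `g`
convex in its first argument and a prior `P`: every `ε`-DP label randomizer `M₀` with
finitely many output labels can be replaced by an `ε`-DP label randomizer `M` with
`m ≤ 2^k` output labels, no larger noisy label loss, the same expected output on every
input label (so unbiasedness is preserved), and whose columns are positive scalar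
multiples of pairwise distinct `{1, e^ε}`-valued vectors. -/
theorem stmt_3
    (ε : ℝ) (hε : 0 < ε)
    (Y : Finset ℝ) (hYcard : 2 ≤ Y.card)
    (g : ℝ → ℝ → ℝ)
    (hg : ∀ y ∈ Y, ConvexOn ℝ Set.univ (fun s => g s y))
    (P : ℝ → ℝ) (hP0 : ∀ y ∈ Y, 0 ≤ P y) (hP1 : ∑ y ∈ Y, P y = 1)
    (m₀ : ℕ) (yhat₀ : Fin m₀ → ℝ) (M₀ : ℝ → Fin m₀ → ℝ)
    (h₀nonneg : ∀ y ∈ Y, ∀ i, 0 ≤ M₀ y i)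
    (h₀sum : ∀ y ∈ Y, ∑ i, M₀ y i = 1)
    (h₀dp : ∀ i, ∀ y ∈ Y, ∀ y' ∈ Y, M₀ y' i ≤ Real.exp ε * M₀ y i) :
    ∃ (m : ℕ) (yhat : Fin m → ℝ) (M : ℝ → Fin m → ℝ),
      -- M is a label randomizer on Y
      (∀ y ∈ Y, ∀ j, 0 ≤ M y j) ∧
      (∀ y ∈ Y, ∑ j, M y j = 1) ∧
      -- M is ε-DP
      (∀ j, ∀ y ∈ Y, ∀ y' ∈ Y, M y' j ≤ Real.exp ε * M y j) ∧
      -- (1) the noisy label loss does not increase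
      (∑ y ∈ Y, P y * ∑ j, M y j * g (yhat j) y) ≤
        (∑ y ∈ Y, P y * ∑ i, M₀ y i * g (yhat₀ i) y) ∧
      -- (2) the expected output of M equals the expected output of M₀ on every input
      (∀ y ∈ Y, ∑ j, M y j * yhat j = ∑ i, M₀ y i * yhat₀ i) ∧
      -- (3) at most 2^k output labels
      m ≤ 2 ^ Y.card ∧
      -- (4) each column is a positive multiple of a {1, e^ε}-valued vector,
      -- with these vectors pairwise distinct across columns
      ∃ (c : Fin m → ℝ) (w : Fin m → ℝ → ℝ),
        (∀ j, 0 < c j) ∧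
        (∀ j, ∀ y ∈ Y, w j y = 1 ∨ w j y = Real.exp ε) ∧
        (∀ j, ∀ y ∈ Y, M y j = c j * w j y) ∧
        (∀ j j' : Fin m, j ≠ j' → ∃ y ∈ Y, w j y ≠ w j' y) := by
  classical
  set E := Real.exp ε with hE
  have he1 : 1 < E := by
    rw [hE, show (1:ℝ) = Real.exp 0 by simp]
    exact Real.exp_lt_exp.mpr hε
  have hE0 : 0 < E := lt_trans one_pos he1
  have hY : Y.Nonempty := Finset.card_pos.mp (by omega)
  set a : Fin m₀ → ℝ := fun i => Y.inf' hY (fun y => M₀ y i) with ha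
  have ha_le : ∀ i, ∀ y ∈ Y, a i ≤ M₀ y i := fun i y hy => Finset.inf'_le _ hy
  have ha_nonneg : ∀ i, 0 ≤ a i := by
    intro i
    obtain ⟨y₀, hy₀, hEq⟩ := Finset.exists_mem_eq_inf' hY (fun y => M₀ y i)
    have hEq' : a i = M₀ y₀ i := hEq
    rw [hEq']
    exact h₀nonneg y₀ hy₀ i
  have ha_up : ∀ i, ∀ y ∈ Y, M₀ y i ≤ E * a i := by
    intro i y hy
    obtain ⟨y₀, hy₀, hEq⟩ := Finset.exists_mem_eq_inf' hY (fun y => M₀ y i)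
    have hEq' : a i = M₀ y₀ i := hEq
    rw [hEq']
    exact h₀dp i y₀ hy₀ y hy
  set t : Fin m₀ → ℝ → ℝ := fun i y => if a i = 0 then 0 else (M₀ y i / a i - 1) / (E - 1) with htdef
  have ht01 : ∀ i, ∀ y ∈ Y, 0 ≤ t i y ∧ t i y ≤ 1 := by
    intro i y hy
    by_cases h0 : a i = 0
    · simp [htdef, h0]
    · have hai : 0 < a i := (ha_nonneg i).lt_of_ne (Ne.symm h0)
      have h1 : 1 ≤ M₀ y i / a i := (one_le_div hai).mpr (ha_le i y hy)
      have h2 : M₀ y i / a i ≤ E := (div_le_iff₀ hai).mpr (ha_up i y hy)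
      constructor
      · simp only [htdef, h0, if_false]
        exact div_nonneg (by linarith) (by linarith)
      · simp only [htdef, h0, if_false]
        rw [div_le_one (by linarith)]
        linarith
  set lam : Fin m₀ → Finset ℝ → ℝ :=
    fun i S => a i * ((∏ y ∈ S, t i y) * ∏ y ∈ Y \ S, (1 - t i y)) with hlamdef
  have hlam_nonneg : ∀ i, ∀ S ∈ Y.powerset, 0 ≤ lam i S := by
    intro i S hS
    rw [Finset.mem_powerset] at hS
    refine mul_nonneg (ha_nonneg i) (mul_nonneg ?_ ?_)
    · exact Finset.prod_nonneg fun y hyS => (ht01 i y (hS hyS)).1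
    · refine Finset.prod_nonneg fun y hyS => ?_
      have := (ht01 i y (Finset.mem_sdiff.mp hyS).1).2
      linarith
  have hdecomp : ∀ i, ∀ y ∈ Y, ∑ S ∈ Y.powerset, lam i S * (if y ∈ S then E else 1) = M₀ y i := by
    intro i y hy
    have hk := key_id Y (t i) E hy
    have step1 : ∑ S ∈ Y.powerset, lam i S * (if y ∈ S then E else 1)
        = a i * (1 - t i y + t i y * E) := by
      rw [← hk, Finset.mul_sum]
      refine Finset.sum_congr rfl fun S _ => ?_
      simp only [hlamdef]; ring
    rw [step1]
    by_cases h0 : a i = 0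
    · have hM0 : M₀ y i = 0 := by
        have h := ha_up i y hy
        have h2 := h₀nonneg y hy i
        rw [h0] at h
        linarith
      rw [h0, hM0]; ring
    · have hai : 0 < a i := (ha_nonneg i).lt_of_ne (Ne.symm h0)
      have hE1 : E - 1 ≠ 0 := by linarith
      simp only [htdef, h0, if_false]
      field_simp
      ring
  set c : Finset ℝ → ℝ := fun S => ∑ i, lam i S with hcdef
  set b : Finset ℝ → ℝ := fun S => ∑ i, lam i S * yhat₀ i with hbdef
  have hc_nonneg : ∀ S ∈ Y.powerset, 0 ≤ c S :=
    fun S hS => Finset.sum_nonneg fun i _ => hlam_nonneg i S hS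
  have hczero : ∀ S ∈ Y.powerset, c S = 0 → ∀ i, lam i S = 0 := by
    intro S hS h0 i
    exact (Finset.sum_eq_zero_iff_of_nonneg (fun i _ => hlam_nonneg i S hS)).mp h0 i
      (Finset.mem_univ i)
  set T : Finset (Finset ℝ) := Y.powerset.filter (fun S => 0 < c S) with hTdef
  set m := T.card with hm
  set σ : Fin m ≃ {x // x ∈ T} := T.equivFin.symm with hσ
  set Sc : Fin m → Finset ℝ := fun j => (σ j : Finset ℝ) with hScdef
  have hSc_mem : ∀ j, Sc j ∈ T := fun j => (σ j).2
  have hSc_pow : ∀ j, Sc j ∈ Y.powerset := fun j => (Finset.mem_filter.mp (hSc_mem j)).1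
  have hSc_pos : ∀ j, 0 < c (Sc j) := fun j => (Finset.mem_filter.mp (hSc_mem j)).2
  have hSc_inj : Function.Injective Sc := fun j j' h => σ.injective (Subtype.ext h)
  have hsum_T : ∀ f : Finset ℝ → ℝ, ∑ j, f (Sc j) = ∑ S ∈ T, f S := by
    intro f
    rw [← Finset.sum_coe_sort T f]
    exact Fintype.sum_equiv σ _ _ (fun j => rfl)
  have hsum_P : ∀ f : Finset ℝ → ℝ, (∀ S ∈ Y.powerset, c S = 0 → f S = 0) →
      ∑ S ∈ T, f S = ∑ S ∈ Y.powerset, f S := by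
    intro f hf
    refine Finset.sum_subset (Finset.filter_subset _ _) fun S hS hST => ?_
    refine hf S hS ?_
    have h1 := hc_nonneg S hS
    have h2 : ¬ 0 < c S := fun h => hST (Finset.mem_filter.mpr ⟨hS, h⟩)
    linarith
  set w : Fin m → ℝ → ℝ := fun j y => if y ∈ Sc j then E else 1 with hwdef
  set yhat : Fin m → ℝ := fun j => b (Sc j) / c (Sc j) with hyhatdef
  set M : ℝ → Fin m → ℝ := fun y j => c (Sc j) * w j y with hMdef
  have hw_bounds : ∀ j y, 1 ≤ w j y ∧ w j y ≤ E := by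
    intro j y
    simp only [hwdef]
    by_cases h : y ∈ Sc j <;> simp [h] <;> linarith
  -- Jensen per S ∈ T
  have hjensen : ∀ y ∈ Y, ∀ S ∈ T, c S * g (b S / c S) y ≤ ∑ i, lam i S * g (yhat₀ i) y := by
    intro y hy S hS
    have hSpow : S ∈ Y.powerset := (Finset.mem_filter.mp hS).1
    have hcpos : 0 < c S := (Finset.mem_filter.mp hS).2
    have hw0 : ∀ i ∈ Finset.univ, 0 ≤ lam i S / c S :=
      fun i _ => div_nonneg (hlam_nonneg i S hSpow) hcpos.le
    have hw1 : ∑ i, lam i S / c S = 1 := by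
      rw [← Finset.sum_div]
      exact div_self hcpos.ne'
    have hmem : ∀ i ∈ Finset.univ, yhat₀ i ∈ (Set.univ : Set ℝ) := fun i _ => trivial
    have hJ := (hg y hy).map_sum_le hw0 hw1 hmem
    have heq : ∑ i, (lam i S / c S) • yhat₀ i = b S / c S := by
      rw [hbdef, Finset.sum_div]
      refine Finset.sum_congr rfl fun i _ => ?_
      rw [smul_eq_mul]; ring
    rw [heq] at hJ
    have := mul_le_mul_of_nonneg_left hJ hcpos.le
    calc c S * g (b S / c S) y ≤ c S * ∑ i, (lam i S / c S) * g (yhat₀ i) y := this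
      _ = ∑ i, lam i S * g (yhat₀ i) y := by
          rw [Finset.mul_sum]
          refine Finset.sum_congr rfl fun i _ => ?_
          field_simp
  refine ⟨m, yhat, M, ?_, ?_, ?_, ?_, ?_, ?_,
    ⟨fun j => c (Sc j), w, fun j => hSc_pos j, ?_, ?_, ?_⟩⟩
  · -- nonneg
    intro y hy j
    exact mul_nonneg (hSc_pos j).le (le_trans zero_le_one (hw_bounds j y).1)
  · -- row sums
    intro y hy
    have : ∑ j, M y j = ∑ S ∈ T, (fun S => c S * (if y ∈ S then E else 1)) S := by
      rw [← hsum_T]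
    rw [this, hsum_P _ (fun S hS h0 => by simp [h0])]
    have expand : ∑ S ∈ Y.powerset, c S * (if y ∈ S then E else 1)
        = ∑ S ∈ Y.powerset, ∑ i, lam i S * (if y ∈ S then E else 1) := by
      refine Finset.sum_congr rfl fun S _ => ?_
      rw [hcdef, Finset.sum_mul]
    rw [expand, Finset.sum_comm]
    have : ∀ i ∈ Finset.univ, ∑ S ∈ Y.powerset, lam i S * (if y ∈ S then E else 1) = M₀ y i :=
      fun i _ => hdecomp i y hy
    rw [Finset.sum_congr rfl this]
    exact h₀sum y hy
  · -- DP
    intro j y hy y' hy'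
    have h1 := (hw_bounds j y').2
    have h2 := (hw_bounds j y).1
    have hc := (hSc_pos j).le
    calc M y' j = c (Sc j) * w j y' := rfl
      _ ≤ c (Sc j) * E := mul_le_mul_of_nonneg_left h1 hc
      _ = E * (c (Sc j) * 1) := by ring
      _ ≤ E * (c (Sc j) * w j y) := by
          refine mul_le_mul_of_nonneg_left ?_ hE0.le
          exact mul_le_mul_of_nonneg_left h2 hc
      _ = E * M y j := rfl
  · -- loss
    refine Finset.sum_le_sum fun y hy => ?_
    refine mul_le_mul_of_nonneg_left ?_ (hP0 y hy)
    have step1 : ∑ j, M y j * g (yhat j) y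
        = ∑ S ∈ T, (fun S => (if y ∈ S then E else 1) * (c S * g (b S / c S) y)) S := by
      rw [← hsum_T]
      refine Finset.sum_congr rfl fun j _ => ?_
      simp only [hMdef, hwdef, hyhatdef]
      ring
    rw [step1]
    have step2 : ∑ S ∈ T, (if y ∈ S then E else 1) * (c S * g (b S / c S) y)
        ≤ ∑ S ∈ T, (if y ∈ S then E else 1) * ∑ i, lam i S * g (yhat₀ i) y := by
      refine Finset.sum_le_sum fun S hS => ?_
      refine mul_le_mul_of_nonneg_left (hjensen y hy S hS) ?_
      by_cases h : y ∈ S <;> simp [h] <;> linarith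
    refine le_trans step2 ?_
    have step3 : ∑ S ∈ T, (fun S => (if y ∈ S then E else 1) * ∑ i, lam i S * g (yhat₀ i) y) S
        = ∑ S ∈ Y.powerset, (if y ∈ S then E else 1) * ∑ i, lam i S * g (yhat₀ i) y := by
      refine hsum_P _ fun S hS h0 => ?_
      have : ∀ i ∈ Finset.univ, lam i S * g (yhat₀ i) y = 0 := fun i _ => by
        rw [hczero S hS h0 i]; ring
      rw [Finset.sum_congr rfl this]
      simp
    rw [step3]
    have step4 : ∑ S ∈ Y.powerset, (if y ∈ S then E else 1) * ∑ i, lam i S * g (yhat₀ i) y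
        = ∑ i, M₀ y i * g (yhat₀ i) y := by
      have : ∀ S ∈ Y.powerset, (if y ∈ S then E else 1) * ∑ i, lam i S * g (yhat₀ i) y
          = ∑ i, (lam i S * (if y ∈ S then E else 1)) * g (yhat₀ i) y := by
        intro S _
        rw [Finset.mul_sum]
        refine Finset.sum_congr rfl fun i _ => ?_
        ring
      rw [Finset.sum_congr rfl this, Finset.sum_comm]
      refine Finset.sum_congr rfl fun i _ => ?_
      rw [← Finset.sum_mul, hdecomp i y hy]
    rw [step4]
  · -- expected output preserved
    intro y hy
    have step1 : ∑ j, M y j * yhat j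
        = ∑ S ∈ T, (fun S => (if y ∈ S then E else 1) * b S) S := by
      rw [← hsum_T]
      refine Finset.sum_congr rfl fun j _ => ?_
      simp only [hMdef, hwdef, hyhatdef]
      have hc := (hSc_pos j).ne'
      field_simp
    rw [step1]
    rw [hsum_P _ (fun S hS h0 => by
      have : b S = 0 := by
        rw [hbdef]
        refine Finset.sum_eq_zero fun i _ => ?_
        rw [hczero S hS h0 i]; ring
      rw [this]; ring)]
    have step2 : ∑ S ∈ Y.powerset, (if y ∈ S then E else 1) * b S
        = ∑ i, M₀ y i * yhat₀ i := by
      have : ∀ S ∈ Y.powerset, (if y ∈ S then E else 1) * b S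
          = ∑ i, (lam i S * (if y ∈ S then E else 1)) * yhat₀ i := by
        intro S _
        rw [hbdef, Finset.mul_sum]
        refine Finset.sum_congr rfl fun i _ => ?_
        ring
      rw [Finset.sum_congr rfl this, Finset.sum_comm]
      refine Finset.sum_congr rfl fun i _ => ?_
      rw [← Finset.sum_mul, hdecomp i y hy]
    exact step2
  · -- cardinality
    calc m = T.card := rfl
      _ ≤ Y.powerset.card := Finset.card_filter_le _ _
      _ = 2 ^ Y.card := Finset.card_powerset Y
  · -- w values
    intro j y hy
    simp only [hwdef]
    by_cases h : y ∈ Sc j <;> simp [h]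
  · -- M = c * w
    intro j y hy
    rfl
  · -- distinct columns
    intro j j' hne
    have hS : Sc j ≠ Sc j' := fun h => hne (hSc_inj h)
    have hex : ∃ y, ¬ (y ∈ Sc j ↔ y ∈ Sc j') := by
      by_contra hcon
      push_neg at hcon
      exact hS (Finset.ext hcon)
    obtain ⟨y, hy⟩ := hex
    have hpow : Sc j ⊆ Y := Finset.mem_powerset.mp (hSc_pow j)
    have hpow' : Sc j' ⊆ Y := Finset.mem_powerset.mp (hSc_pow j')
    rcases Classical.em (y ∈ Sc j) with h1 | h1 <;> rcases Classical.em (y ∈ Sc j') with h2 | h2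
    · exact absurd (iff_of_true h1 h2) hy
    · exact ⟨y, hpow h1, by simp only [hwdef]; simp [h1, h2]; linarith⟩
    · exact ⟨y, hpow' h2, by simp only [hwdef]; simp [h1, h2]; linarith⟩
    · exact absurd (iff_of_false h1 h2) hy
end

section
/- Let ε > 0, let Y ⊆ ℝ be a finite set of input labels, and let M be an unbiased label randomizer on Y with output labels ŷ_1 < ... < ŷ_m such that for every column i, the minimum entry q_i = min_{y∈Y} M_{y→i} is strictly positive, every entry satisfies M_{y→i} ∈ {q_i, e^ε·q_i}, and for each y ∈ Y the set T(y) := {i : M_{y→i} = e^ε·q_i} is a nonempty contiguous set of indices in {1, ..., m}. Then for all y ≠ y' in Y, T(y) is not a proper subset of T(y'); and moreover, if y < y' then min T(y) < min T(y') and max T(y) < max T(y'). -/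
open Finset in
lemma key_sum_le {m : ℕ} (q w : Fin m → ℝ) (hq : ∀ i, 0 < q i)
    (hw : Monotone w) (a b a' b' : Fin m) (ha : a' ≤ a) (hb : b' ≤ b)
    (hsum : ∑ i ∈ Icc a' b', q i = ∑ i ∈ Icc a b, q i) :
    ∑ i ∈ Icc a' b', q i * w i ≤ ∑ i ∈ Icc a b, q i * w i := by
  set S' := Icc a' b' with hS'
  set S := Icc a b with hS
  have e1 : ∑ i ∈ S' ∩ S, q i + ∑ i ∈ S' \ S, q i = ∑ i ∈ S', q i :=
    Finset.sum_inter_add_sum_sdiff _ _ _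
  have e2 : ∑ i ∈ S ∩ S', q i + ∑ i ∈ S \ S', q i = ∑ i ∈ S, q i :=
    Finset.sum_inter_add_sum_sdiff _ _ _
  have e3 : ∑ i ∈ S' ∩ S, (q i * w i) + ∑ i ∈ S' \ S, (q i * w i) = ∑ i ∈ S', q i * w i :=
    Finset.sum_inter_add_sum_sdiff _ _ _
  have e4 : ∑ i ∈ S ∩ S', (q i * w i) + ∑ i ∈ S \ S', (q i * w i) = ∑ i ∈ S, q i * w i :=
    Finset.sum_inter_add_sum_sdiff _ _ _
  have hcomm : S' ∩ S = S ∩ S' := Finset.inter_comm _ _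
  have hdq : ∑ i ∈ S' \ S, q i = ∑ i ∈ S \ S', q i := by
    rw [hcomm] at e1; linarith
  have h1 : ∑ i ∈ S' \ S, q i * w i ≤ (∑ i ∈ S' \ S, q i) * w a := by
    rw [Finset.sum_mul]
    apply Finset.sum_le_sum
    intro i hi
    have hiS' := (Finset.mem_sdiff.mp hi).1
    have hiS := (Finset.mem_sdiff.mp hi).2
    have hib : i ≤ b := le_trans (Finset.mem_Icc.mp hiS').2 hb
    have hia : i ≤ a := by
      by_contra hcon
      exact hiS (Finset.mem_Icc.mpr ⟨le_of_lt (lt_of_not_ge hcon), hib⟩)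
    exact mul_le_mul_of_nonneg_left (hw hia) (le_of_lt (hq i))
  have h2 : (∑ i ∈ S \ S', q i) * w a ≤ ∑ i ∈ S \ S', q i * w i := by
    rw [Finset.sum_mul]
    apply Finset.sum_le_sum
    intro i hi
    have hiS := (Finset.mem_sdiff.mp hi).1
    exact mul_le_mul_of_nonneg_left (hw (Finset.mem_Icc.mp hiS).1) (le_of_lt (hq i))
  rw [hcomm] at e3
  rw [hdq] at h1
  linarith

/-- For `ε > 0`, a finite label set `Y ⊆ ℝ`, and an unbiased label
randomizer `M` with strictly increasing output labels `yhat 1 < ... < yhat m`, whose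
column minima `q i` are positive, whose entries all lie in `{q i, e^ε·q i}`, and for
which each row's set `T(y) = {i : M y i = e^ε·q i}` of `U`-entries is nonempty and
contiguous: for distinct `y ≠ y'` in `Y`, `T(y)` is not a proper subset of `T(y')`;
and if `y < y'` then `min T(y) < min T(y')` and `max T(y) < max T(y')`. -/
theorem stmt_5
    (ε : ℝ) (hε : 0 < ε)
    (Y : Finset ℝ)
    (m : ℕ) (yhat : Fin m → ℝ) (hyhat : StrictMono yhat)
    (M : ℝ → Fin m → ℝ) (q : Fin m → ℝ)
    (hnonneg : ∀ y ∈ Y, ∀ i, 0 ≤ M y i)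
    (hsum : ∀ y ∈ Y, ∑ i, M y i = 1)
    (hunbiased : ∀ y ∈ Y, ∑ i, M y i * yhat i = y)
    -- q i is the minimum entry of column i, and it is strictly positive
    (hqpos : ∀ i, 0 < q i)
    (hqmin : ∀ i, ∀ y ∈ Y, q i ≤ M y i)
    (hqatt : ∀ i, ∃ y ∈ Y, M y i = q i)
    -- every entry lies in {q i, e^ε·q i}
    (hentries : ∀ i, ∀ y ∈ Y, M y i = q i ∨ M y i = Real.exp ε * q i)
    -- T(y) = {i : M y i = e^ε·q i} is nonempty and contiguous for every y ∈ Y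
    (hTne : ∀ y ∈ Y, ∃ i, M y i = Real.exp ε * q i)
    (hTcontig : ∀ y ∈ Y, ∀ i i' i'' : Fin m, i ≤ i' → i' ≤ i'' →
      M y i = Real.exp ε * q i → M y i'' = Real.exp ε * q i'' →
      M y i' = Real.exp ε * q i') :
    -- T(y) is never a proper subset of T(y') for distinct y, y' ∈ Y
    (∀ y ∈ Y, ∀ y' ∈ Y, y ≠ y' →
      ¬ ({i : Fin m | M y i = Real.exp ε * q i} ⊂
          {i : Fin m | M y' i = Real.exp ε * q i})) ∧
    -- if y < y' then min T(y) < min T(y') and max T(y) < max T(y')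
    (∀ y ∈ Y, ∀ y' ∈ Y, y < y' →
      (∀ i i' : Fin m,
        (M y i = Real.exp ε * q i ∧
          ∀ j, M y j = Real.exp ε * q j → i ≤ j) →
        (M y' i' = Real.exp ε * q i' ∧
          ∀ j, M y' j = Real.exp ε * q j → i' ≤ j) →
        i < i') ∧
      (∀ i i' : Fin m,
        (M y i = Real.exp ε * q i ∧
          ∀ j, M y j = Real.exp ε * q j → j ≤ i) →
        (M y' i' = Real.exp ε * q i' ∧
          ∀ j, M y' j = Real.exp ε * q j → j ≤ i') →
        i < i')) := by
  classical
  have hE1 : 1 < Real.exp ε := by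
    calc (1:ℝ) = Real.exp 0 := (Real.exp_zero).symm
    _ < Real.exp ε := Real.exp_lt_exp.mpr hε
  have hEpos : 0 < Real.exp ε - 1 := by linarith
  set S : ℝ → Finset (Fin m) :=
    fun y => Finset.univ.filter (fun i => M y i = Real.exp ε * q i) with hSdef
  have hmemS : ∀ y i, i ∈ S y ↔ M y i = Real.exp ε * q i := by
    intro y i; simp [hSdef]
  have hSne : ∀ y ∈ Y, (S y).Nonempty := by
    intro y hy
    obtain ⟨i, hi⟩ := hTne y hy
    exact ⟨i, (hmemS y i).mpr hi⟩
  -- generic fact: sums of (M y i - q i)*f i concentrate on S y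
  have hconc : ∀ y ∈ Y, ∀ f : Fin m → ℝ,
      ∑ i ∈ S y, ((M y i - q i) * f i) = ∑ i, (M y i - q i) * f i := by
    intro y hy f
    apply Finset.sum_filter_of_ne
    intro i _ hne
    rcases hentries i y hy with h | h
    · exact absurd (by rw [h]; ring) hne
    · exact h
  have hSval : ∀ y ∈ Y, ∀ f : Fin m → ℝ,
      (Real.exp ε - 1) * ∑ i ∈ S y, q i * f i = ∑ i, (M y i - q i) * f i := by
    intro y hy f
    rw [← hconc y hy f, Finset.mul_sum]
    apply Finset.sum_congr rfl
    intro i hi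
    have := (hmemS y i).mp hi
    rw [this]; ring
  have hqsum : ∀ y ∈ Y, (Real.exp ε - 1) * ∑ i ∈ S y, q i = 1 - ∑ i, q i := by
    intro y hy
    have := hSval y hy (fun _ => 1)
    simp only [mul_one] at this
    rw [this, Finset.sum_sub_distrib, hsum y hy]
  have hwsum : ∀ y ∈ Y,
      (Real.exp ε - 1) * ∑ i ∈ S y, q i * yhat i = y - ∑ i, q i * yhat i := by
    intro y hy
    have := hSval y hy yhat
    rw [this]
    have : ∑ i, (M y i - q i) * yhat i = ∑ i, (M y i * yhat i - q i * yhat i) := by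
      apply Finset.sum_congr rfl; intro i _; ring
    rw [this, Finset.sum_sub_distrib, hunbiased y hy]
  have hqeq : ∀ y ∈ Y, ∀ y' ∈ Y, ∑ i ∈ S y, q i = ∑ i ∈ S y', q i := by
    intro y hy y' hy'
    have h1 := hqsum y hy
    have h2 := hqsum y' hy'
    have := h1.trans h2.symm
    exact mul_left_cancel₀ (ne_of_gt hEpos) this
  have hwlt : ∀ y ∈ Y, ∀ y' ∈ Y, y < y' →
      ∑ i ∈ S y, q i * yhat i < ∑ i ∈ S y', q i * yhat i := by
    intro y hy y' hy' hlt
    have h1 := hwsum y hy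
    have h2 := hwsum y' hy'
    nlinarith
  -- S y is an interval
  have hIcc : ∀ y ∈ Y, ∀ h : (S y).Nonempty,
      S y = Finset.Icc ((S y).min' h) ((S y).max' h) := by
    intro y hy h
    apply Finset.ext
    intro i
    constructor
    · intro hi
      exact Finset.mem_Icc.mpr ⟨Finset.min'_le _ _ hi, Finset.le_max' _ _ hi⟩
    · intro hi
      obtain ⟨h1, h2⟩ := Finset.mem_Icc.mp hi
      exact (hmemS y i).mpr (hTcontig y hy _ i _ h1 h2
        ((hmemS y _).mp (Finset.min'_mem _ h)) ((hmemS y _).mp (Finset.max'_mem _ h)))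
  -- proper subset gives strictly smaller q-sum, contradicting hqeq
  have hnotss : ∀ y ∈ Y, ∀ y' ∈ Y, ¬ (S y ⊂ S y') := by
    intro y hy y' hy' hss
    obtain ⟨j, hjt, hjs⟩ := Finset.exists_of_ssubset hss
    have hlt : ∑ i ∈ S y, q i < ∑ i ∈ S y', q i :=
      Finset.sum_lt_sum_of_subset hss.subset hjt hjs (hqpos j)
        (fun k _ _ => le_of_lt (hqpos k))
    exact absurd (hqeq y hy y' hy') (ne_of_lt hlt)
  refine ⟨?_, ?_⟩
  · intro y hy y' hy' _ hss
    apply hnotss y hy y' hy'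
    have h1 : {i : Fin m | M y i = Real.exp ε * q i} = ↑(S y) := by
      ext i; simp [hmemS y i]
    have h2 : {i : Fin m | M y' i = Real.exp ε * q i} = ↑(S y') := by
      ext i; simp [hmemS y' i]
    rw [h1, h2, Finset.coe_ssubset] at hss
    exact hss
  · intro y hy y' hy' hlt
    have hne := hSne y hy
    have hne' := hSne y' hy'
    have hIy := hIcc y hy hne
    have hIy' := hIcc y' hy' hne'
    have hwstrict := hwlt y hy y' hy' hlt
    have hqe := hqeq y' hy' y hy
    constructor
    · -- min case
      intro i i' hi hi'
      have hiS : i ∈ S y := (hmemS y i).mpr hi.1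
      have hi'S : i' ∈ S y' := (hmemS y' i').mpr hi'.1
      have himin : i = (S y).min' hne :=
        le_antisymm (hi.2 _ ((hmemS y _).mp (Finset.min'_mem _ hne)))
          (Finset.min'_le _ _ hiS)
      have hi'min : i' = (S y').min' hne' :=
        le_antisymm (hi'.2 _ ((hmemS y' _).mp (Finset.min'_mem _ hne')))
          (Finset.min'_le _ _ hi'S)
      by_contra hcon
      push_neg at hcon  -- i' ≤ i
      set b := (S y).max' hne with hbdef
      set b' := (S y').max' hne' with hb'def
      have hIy2 : S y = Finset.Icc i b := by rw [hIy, ← himin]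
      have hIy'2 : S y' = Finset.Icc i' b' := by rw [hIy', ← hi'min]
      have hbb : b' ≤ b := by
        by_contra hb
        push_neg at hb  -- b < b'
        have hsub : S y ⊂ S y' := by
          constructor
          · rw [hIy2, hIy'2]
            exact Finset.Icc_subset_Icc hcon (le_of_lt hb)
          · intro hrev
            have : b' ∈ S y := hrev ((hmemS y' b').mpr
              ((hmemS y' b').mp (Finset.max'_mem _ hne')))
            have : b' ≤ b := Finset.le_max' _ _ this
            exact absurd this (not_le.mpr hb)
        exact hnotss y hy y' hy' hsub
      have hkey : ∑ j ∈ Finset.Icc i' b', q j * yhat j ≤ ∑ j ∈ Finset.Icc i b, q j * yhat j := by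
        apply key_sum_le q yhat hqpos hyhat.monotone i b i' b' hcon hbb
        rw [← hIy2, ← hIy'2]
        exact hqe
      rw [← hIy2, ← hIy'2] at hkey
      exact absurd hwstrict (not_lt.mpr hkey)
    · -- max case
      intro i i' hi hi'
      have hiS : i ∈ S y := (hmemS y i).mpr hi.1
      have hi'S : i' ∈ S y' := (hmemS y' i').mpr hi'.1
      have himax : i = (S y).max' hne :=
        le_antisymm (Finset.le_max' _ _ hiS)
          (hi.2 _ ((hmemS y _).mp (Finset.max'_mem _ hne)))
      have hi'max : i' = (S y').max' hne' :=
        le_antisymm (Finset.le_max' _ _ hi'S)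
          (hi'.2 _ ((hmemS y' _).mp (Finset.max'_mem _ hne')))
      by_contra hcon
      push_neg at hcon  -- i' ≤ i
      set a := (S y).min' hne with hadef
      set a' := (S y').min' hne' with ha'def
      have hIy2 : S y = Finset.Icc a i := by rw [hIy, ← himax]
      have hIy'2 : S y' = Finset.Icc a' i' := by rw [hIy', ← hi'max]
      have haa : a' ≤ a := by
        by_contra hb
        push_neg at hb  -- a < a'
        have hsub : S y' ⊂ S y := by
          constructor
          · rw [hIy2, hIy'2]
            exact Finset.Icc_subset_Icc (le_of_lt hb) hcon
          · intro hrev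
            have : a ∈ S y' := hrev (Finset.min'_mem _ hne)
            have : a' ≤ a := Finset.min'_le _ _ this
            exact absurd this (not_le.mpr hb)
        exact hnotss y' hy' y hy hsub
      have hkey : ∑ j ∈ Finset.Icc a' i', q j * yhat j ≤ ∑ j ∈ Finset.Icc a i, q j * yhat j := by
        apply key_sum_le q yhat hqpos hyhat.monotone a i a' i' haa hcon
        rw [← hIy2, ← hIy'2]
        exact hqe
      rw [← hIy2, ← hIy'2] at hkey
      exact absurd hwstrict (not_lt.mpr hkey)
end

section
/- Let ε > 0 and let Y ⊆ ℝ be a finite set of input labels with k = |Y| ≥ 2. Set y₀ = min Y, y₁ = max Y, and define ŷ₀ = ((e^ε + k − 1)·y₀ − Σ_{y∈Y} y)/(e^ε − 1) and ŷ₁ = ((e^ε + k − 1)·y₁ − Σ_{y∈Y} y)/(e^ε − 1). Then ŷ₀ < ŷ₁, and the matrix M with two output labels ŷ₀, ŷ₁ given by M_{y→0} = (ŷ₁ − y)/(ŷ₁ − ŷ₀) and M_{y→1} = (y − ŷ₀)/(ŷ₁ − ŷ₀) is a well-defined label randomizer on Y (all entries nonnegative, rows summing to 1) that is unbiased and ε-DP;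 in particular, there exists an ε-DP unbiased label randomizer on Y whose output labels are exactly the smallest and largest outputs of the ε-debiased randomized response, so the corresponding linear program is feasible. -/
/-- For `ε > 0` and a finite label set `Y ⊆ ℝ` with `k = |Y| ≥ 2`, with
`y₀ = min Y`, `y₁ = max Y`, and `yhat₀, yhat₁` the smallest and largest outputs of the
`ε`-debiased randomized response, one has `yhat₀ < yhat₁`, and the two-output matrix
`M y = ((yhat₁ − y)/(yhat₁ − yhat₀), (y − yhat₀)/(yhat₁ − yhat₀))` is a well-defined
label randomizer on `Y` (nonnegative entries, rows summing to 1) that is unbiased and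
`ε`-DP.  In particular the LP of the paper is feasible with `Ŷ = {yhat₀, yhat₁}`. -/
theorem stmt_6
    (ε : ℝ) (hε : 0 < ε)
    (Y : Finset ℝ) (hYcard : 2 ≤ Y.card)
    (y₀ y₁ S yhat₀ yhat₁ : ℝ)
    (hy₀ : y₀ = Y.min' (Finset.card_pos.mp (by omega)))
    (hy₁ : y₁ = Y.max' (Finset.card_pos.mp (by omega)))
    (hS : S = ∑ y ∈ Y, y)
    (hyhat₀ : yhat₀ = ((Real.exp ε + Y.card - 1) * y₀ - S) / (Real.exp ε - 1))
    (hyhat₁ : yhat₁ = ((Real.exp ε + Y.card - 1) * y₁ - S) / (Real.exp ε - 1)) :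
    yhat₀ < yhat₁ ∧
    -- entries nonnegative
    (∀ y ∈ Y, 0 ≤ (yhat₁ - y) / (yhat₁ - yhat₀)) ∧
    (∀ y ∈ Y, 0 ≤ (y - yhat₀) / (yhat₁ - yhat₀)) ∧
    -- rows sum to 1
    (∀ y ∈ Y, (yhat₁ - y) / (yhat₁ - yhat₀) + (y - yhat₀) / (yhat₁ - yhat₀) = 1) ∧
    -- unbiased
    (∀ y ∈ Y, ((yhat₁ - y) / (yhat₁ - yhat₀)) * yhat₀ +
        ((y - yhat₀) / (yhat₁ - yhat₀)) * yhat₁ = y) ∧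
    -- ε-DP: each column's entries are within a factor e^ε of each other
    (∀ y ∈ Y, ∀ y' ∈ Y,
      (yhat₁ - y') / (yhat₁ - yhat₀) ≤ Real.exp ε * ((yhat₁ - y) / (yhat₁ - yhat₀))) ∧
    (∀ y ∈ Y, ∀ y' ∈ Y,
      (y' - yhat₀) / (yhat₁ - yhat₀) ≤ Real.exp ε * ((y - yhat₀) / (yhat₁ - yhat₀))) := by
  have hne : Y.Nonempty := Finset.card_pos.mp (by omega)
  set E := Real.exp ε with hEdef
  have hE : 1 < E := by
    have := Real.add_one_le_exp ε
    simp only [hEdef]; linarith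
  have hE1 : (0:ℝ) < E - 1 := by linarith
  have hk : (2:ℝ) ≤ (Y.card : ℝ) := by exact_mod_cast hYcard
  have hmem₀ : y₀ ∈ Y := hy₀ ▸ Y.min'_mem hne
  have hmem₁ : y₁ ∈ Y := hy₁ ▸ Y.max'_mem hne
  have hle₀ : ∀ y ∈ Y, y₀ ≤ y := fun y hy => hy₀ ▸ Y.min'_le y hy
  have hle₁ : ∀ y ∈ Y, y ≤ y₁ := fun y hy => hy₁ ▸ Y.le_max' y hy
  have hlt : y₀ < y₁ := by
    rw [hy₀, hy₁]; exact Y.min'_lt_max'_of_card (by omega)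
  -- key sum facts
  have hA : y₁ - y₀ ≤ (Y.card : ℝ) * y₁ - S := by
    have h1 : y₁ - y₀ ≤ ∑ y ∈ Y, (y₁ - y) :=
      Finset.single_le_sum (fun y hy => sub_nonneg.2 (hle₁ y hy)) hmem₀
    have h2 : ∑ y ∈ Y, (y₁ - y) = (Y.card : ℝ) * y₁ - S := by
      rw [Finset.sum_sub_distrib, Finset.sum_const, hS, nsmul_eq_mul]
    linarith
  have hB : y₁ - y₀ ≤ S - (Y.card : ℝ) * y₀ := by
    have h1 : y₁ - y₀ ≤ ∑ y ∈ Y, (y - y₀) :=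
      Finset.single_le_sum (fun y hy => sub_nonneg.2 (hle₀ y hy)) hmem₁
    have h2 : ∑ y ∈ Y, (y - y₀) = S - (Y.card : ℝ) * y₀ := by
      rw [Finset.sum_sub_distrib, Finset.sum_const, hS, nsmul_eq_mul]
    linarith
  have hS₁ : S ≤ (Y.card : ℝ) * y₁ := by linarith
  have hS₀ : (Y.card : ℝ) * y₀ ≤ S := by linarith
  -- Δ positive
  have hΔ : 0 < yhat₁ - yhat₀ := by
    rw [hyhat₀, hyhat₁, div_sub_div_same]
    apply div_pos _ hE1
    nlinarith
  have hΔne : yhat₁ - yhat₀ ≠ 0 := ne_of_gt hΔ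
  -- bounds
  have hup : ∀ y ∈ Y, y ≤ yhat₁ := by
    intro y hy
    have : y₁ ≤ yhat₁ := by
      rw [hyhat₁, le_div_iff₀ hE1]; nlinarith
    linarith [hle₁ y hy]
  have hdown : ∀ y ∈ Y, yhat₀ ≤ y := by
    intro y hy
    have : yhat₀ ≤ y₀ := by
      rw [hyhat₀, div_le_iff₀ hE1]; nlinarith
    linarith [hle₀ y hy]
  -- DP key inequalities
  have hkey₁ : yhat₁ - y₀ ≤ E * (yhat₁ - y₁) := by
    rw [hyhat₁]
    rw [div_sub' (ne_of_gt hE1), div_sub' (ne_of_gt hE1), mul_div_assoc',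
      div_le_div_iff₀ hE1 hE1]
    nlinarith [mul_nonneg (mul_nonneg hE1.le hE1.le) (sub_nonneg.2 hA)]
  have hkey₀ : y₁ - yhat₀ ≤ E * (y₀ - yhat₀) := by
    rw [hyhat₀]
    rw [sub_div' (ne_of_gt hE1), sub_div' (ne_of_gt hE1), mul_div_assoc',
      div_le_div_iff₀ hE1 hE1]
    nlinarith [mul_nonneg (mul_nonneg hE1.le hE1.le) (sub_nonneg.2 hB)]
  have hEpos : (0:ℝ) < E := by linarith
  refine ⟨by linarith, ?_, ?_, ?_, ?_, ?_, ?_⟩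
  · intro y hy; exact div_nonneg (by linarith [hup y hy]) hΔ.le
  · intro y hy; exact div_nonneg (by linarith [hdown y hy]) hΔ.le
  · intro y hy; field_simp; ring
  · intro y hy; field_simp; ring
  · intro y hy y' hy'
    rw [mul_div_assoc']
    refine (div_le_div_iff_of_pos_right hΔ).2 ?_
    have h1 : yhat₁ - y' ≤ yhat₁ - y₀ := by linarith [hle₀ y' hy']
    have h2 : E * (yhat₁ - y₁) ≤ E * (yhat₁ - y) := by
      have := hle₁ y hy; nlinarith
    linarith
  · intro y hy y' hy'
    rw [mul_div_assoc']
    refine (div_le_div_iff_of_pos_right hΔ).2 ?_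
    have h1 : y' - yhat₀ ≤ y₁ - yhat₀ := by linarith [hle₁ y' hy']
    have h2 : E * (y₀ - yhat₀) ≤ E * (y - yhat₀) := by
      have := hle₀ y hy; nlinarith
    linarith
end

section
/- Let ε ≥ 0, let Y ⊆ ℝ be a finite set of input labels with prior P, let L < U be reals, let n ≥ 1 be an integer, Δ = (U − L)/n, and consider the grid Ŷ' = {L, L + Δ, L + 2Δ, ..., U}. Let g : ℝ × ℝ → ℝ be a loss such that for every y ∈ Y the function ŷ ↦ g(ŷ, y) is K-Lipschitz on [L, U]. Then for every ε-DP unbiased label randomizer M on Y whose (finitely many) output labels all lie in the interval [L, U], there exists an ε-DP unbiased label randomizer M' on Y whose output labels all lie in the grid Ŷ', such that G(M';P) ≤ G(M;P) + K·Δ. (Consequently, the optimal unbiased randomizer supported on the grid has noisy label loss at most K·Δ larger than that of the optimal unbiased randomizer with outputs in [L, U].) -/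
/-- For `ε ≥ 0`, a finite label set `Y ⊆ ℝ` with prior `P`, reals `L < U`,
an integer `n ≥ 1`, `Δ = (U − L)/n`, the grid `{L, L+Δ, ..., U}`, and a loss `g` that is
`K`-Lipschitz in its first argument on `[L, U]`: every `ε`-DP unbiased label randomizer
`M` with output labels in `[L, U]` can be replaced by an `ε`-DP unbiased label
randomizer `M'` with output labels on the grid, whose noisy label loss exceeds that of
`M` by at most `K·Δ`. -/
theorem stmt_7
    (ε : ℝ) (hε : 0 ≤ ε)
    (Y : Finset ℝ) (hY : Y.Nonempty)
    (P : ℝ → ℝ) (hP0 : ∀ y ∈ Y, 0 ≤ P y) (hP1 : ∑ y ∈ Y, P y = 1)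
    (L U : ℝ) (hLU : L < U)
    (n : ℕ) (hn : 1 ≤ n)
    (Δ : ℝ) (hΔ : Δ = (U - L) / n)
    (K : ℝ) (g : ℝ → ℝ → ℝ)
    (hLip : ∀ y ∈ Y, ∀ s ∈ Set.Icc L U, ∀ s' ∈ Set.Icc L U,
      |g s y - g s' y| ≤ K * |s - s'|)
    (m : ℕ) (yhat : Fin m → ℝ) (M : ℝ → Fin m → ℝ)
    (hnonneg : ∀ y ∈ Y, ∀ i, 0 ≤ M y i)
    (hsum : ∀ y ∈ Y, ∑ i, M y i = 1)
    (hdp : ∀ i, ∀ y ∈ Y, ∀ y' ∈ Y, M y' i ≤ Real.exp ε * M y i)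
    (hunbiased : ∀ y ∈ Y, ∑ i, M y i * yhat i = y)
    (hrange : ∀ i, yhat i ∈ Set.Icc L U) :
    ∃ (m' : ℕ) (yhat' : Fin m' → ℝ) (M' : ℝ → Fin m' → ℝ),
      -- M' is a label randomizer on Y
      (∀ y ∈ Y, ∀ i, 0 ≤ M' y i) ∧
      (∀ y ∈ Y, ∑ i, M' y i = 1) ∧
      -- M' is ε-DP
      (∀ i, ∀ y ∈ Y, ∀ y' ∈ Y, M' y' i ≤ Real.exp ε * M' y i) ∧
      -- M' is unbiased
      (∀ y ∈ Y, ∑ i, M' y i * yhat' i = y) ∧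
      -- the output labels of M' lie on the grid {L, L+Δ, ..., U}
      (∀ i, ∃ j : ℕ, j ≤ n ∧ yhat' i = L + j * Δ) ∧
      -- the noisy label loss increases by at most K·Δ
      (∑ y ∈ Y, P y * ∑ i, M' y i * g (yhat' i) y) ≤
        (∑ y ∈ Y, P y * ∑ i, M y i * g (yhat i) y) + K * Δ := by
  classical
  have hn0 : (0:ℝ) < n := by exact_mod_cast Nat.pos_of_ne_zero (by omega)
  have hΔpos : 0 < Δ := by rw [hΔ]; exact div_pos (sub_pos.mpr hLU) hn0
  obtain ⟨y0, hy0⟩ := hY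
  have hK : 0 ≤ K := by
    have h := hLip y0 hy0 L ⟨le_refl L, hLU.le⟩ U ⟨hLU.le, le_refl U⟩
    have habs : |L - U| = U - L := by
      rw [abs_sub_comm, abs_of_pos (sub_pos.mpr hLU)]
    rw [habs] at h
    nlinarith [abs_nonneg (g L y0 - g U y0)]
  have hnΔ : (n:ℝ) * Δ = U - L := by
    rw [hΔ]; field_simp
  -- grid index for each output label
  set jf : Fin m → ℕ := fun i => min ⌊(yhat i - L) / Δ⌋₊ (n - 1) with hjf
  set a : Fin m → ℝ := fun i => L + (jf i : ℝ) * Δ with ha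
  set lam : Fin m → ℝ := fun i => (yhat i - a i) / Δ with hlam
  have hjle : ∀ i, jf i ≤ n - 1 := fun i => min_le_right _ _
  have ha_le : ∀ i, a i ≤ yhat i := by
    intro i
    have h1 : (jf i : ℝ) ≤ (yhat i - L) / Δ := by
      calc (jf i : ℝ) ≤ (⌊(yhat i - L) / Δ⌋₊ : ℝ) := by
            exact_mod_cast min_le_left _ _
        _ ≤ (yhat i - L) / Δ := Nat.floor_le
            (div_nonneg (by linarith [(hrange i).1]) hΔpos.le)
    have := (mul_le_mul_of_nonneg_right h1 hΔpos.le)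
    rw [div_mul_cancel₀ _ hΔpos.ne'] at this
    simp only [ha]
    linarith
  have hle_b : ∀ i, yhat i ≤ a i + Δ := by
    intro i
    simp only [ha]
    rcases le_or_gt ⌊(yhat i - L) / Δ⌋₊ (n - 1) with h | h
    · have hjeq : jf i = ⌊(yhat i - L) / Δ⌋₊ := min_eq_left h
      have h1 : (yhat i - L) / Δ < (⌊(yhat i - L) / Δ⌋₊ : ℝ) + 1 :=
        Nat.lt_floor_add_one _
      have := (mul_lt_mul_of_pos_right h1 hΔpos)
      rw [div_mul_cancel₀ _ hΔpos.ne'] at this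
      rw [hjeq]
      nlinarith
    · have hjeq : jf i = n - 1 := min_eq_right h.le
      have hcast : ((jf i : ℝ) + 1) = (n : ℝ) := by
        rw [hjeq]
        have : (n - 1 : ℕ) + 1 = n := by omega
        exact_mod_cast congrArg (Nat.cast (R := ℝ)) this
      have h2 : yhat i ≤ U := (hrange i).2
      nlinarith [hnΔ, hcast]
  have hlam0 : ∀ i, 0 ≤ lam i := by
    intro i
    have := ha_le i
    simp only [hlam]
    exact div_nonneg (by linarith) hΔpos.le
  have hlam1 : ∀ i, lam i ≤ 1 := by
    intro i
    have := hle_b i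
    simp only [hlam]
    rw [div_le_one hΔpos]
    linarith
  have hlamΔ : ∀ i, lam i * Δ = yhat i - a i := by
    intro i
    simp only [hlam]
    field_simp
  have haL : ∀ i, L ≤ a i := by
    intro i; simp only [ha]
    have : (0:ℝ) ≤ (jf i : ℝ) * Δ := mul_nonneg (Nat.cast_nonneg _) hΔpos.le
    linarith
  have haU : ∀ i, a i + Δ ≤ U := by
    intro i
    simp only [ha]
    have h1 : (jf i : ℝ) + 1 ≤ (n : ℝ) := by
      have : jf i + 1 ≤ n := by have := hjle i; omega
      exact_mod_cast this
    nlinarith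
  have haU' : ∀ i, a i ≤ U := fun i => by have := haU i; linarith
  have hbL : ∀ i, L ≤ a i + Δ := fun i => by have := haL i; linarith
  refine ⟨m + m,
    Fin.addCases (fun i => a i) (fun i => a i + Δ),
    fun y => Fin.addCases (fun i => M y i * (1 - lam i)) (fun i => M y i * lam i),
    ?_, ?_, ?_, ?_, ?_, ?_⟩
  · intro y hy i
    refine Fin.addCases ?_ ?_ i <;> intro k <;> simp only [Fin.addCases_left, Fin.addCases_right]
    · exact mul_nonneg (hnonneg y hy k) (by linarith [hlam1 k])
    · exact mul_nonneg (hnonneg y hy k) (hlam0 k)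
  · intro y hy
    rw [Fin.sum_univ_add]
    simp only [Fin.addCases_left, Fin.addCases_right]
    rw [← Finset.sum_add_distrib]
    calc (∑ i, (M y i * (1 - lam i) + M y i * lam i)) = ∑ i, M y i := by
          apply Finset.sum_congr rfl; intro i _; ring
      _ = 1 := hsum y hy
  · intro i y hy y' hy'
    refine Fin.addCases ?_ ?_ i <;> intro k <;> simp only [Fin.addCases_left, Fin.addCases_right]
    · rw [← mul_assoc]
      exact mul_le_mul_of_nonneg_right (hdp k y hy y' hy') (by linarith [hlam1 k])
    · rw [← mul_assoc]
      exact mul_le_mul_of_nonneg_right (hdp k y hy y' hy') (hlam0 k)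
  · intro y hy
    rw [Fin.sum_univ_add]
    simp only [Fin.addCases_left, Fin.addCases_right]
    rw [← Finset.sum_add_distrib]
    calc (∑ i, (M y i * (1 - lam i) * a i + M y i * lam i * (a i + Δ)))
        = ∑ i, M y i * yhat i := by
          apply Finset.sum_congr rfl; intro i _
          linear_combination (M y i) * hlamΔ i
      _ = y := hunbiased y hy
  · intro i
    refine Fin.addCases ?_ ?_ i <;> intro k <;> simp only [Fin.addCases_left, Fin.addCases_right]
    · exact ⟨jf k, by have := hjle k; omega, rfl⟩
    · refine ⟨jf k + 1, by have := hjle k; omega, ?_⟩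
      push_cast
      simp only [ha]
      ring
  · have key : ∀ y ∈ Y, (∑ i : Fin (m + m),
        (Fin.addCases (fun i => M y i * (1 - lam i)) (fun i => M y i * lam i) : Fin (m+m) → ℝ) i *
          g ((Fin.addCases (fun i => a i) (fun i => a i + Δ) : Fin (m+m) → ℝ) i) y)
        ≤ (∑ i, M y i * g (yhat i) y) + K * Δ := by
      intro y hy
      rw [Fin.sum_univ_add]
      simp only [Fin.addCases_left, Fin.addCases_right]
      rw [← Finset.sum_add_distrib]
      have hterm : ∀ i : Fin m,
          M y i * (1 - lam i) * g (a i) y + M y i * lam i * g (a i + Δ) y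
            ≤ M y i * (g (yhat i) y + K * Δ) := by
        intro i
        have hA := hLip y hy (a i) ⟨haL i, haU' i⟩ (yhat i) (hrange i)
        have hB := hLip y hy (a i + Δ) ⟨hbL i, haU i⟩ (yhat i) (hrange i)
        have h1 : g (a i) y - g (yhat i) y ≤ K * Δ := by
          have habs : |a i - yhat i| ≤ Δ := by
            rw [abs_le]; constructor <;> [linarith [hle_b i]; linarith [ha_le i]]
          have := (abs_le.mp hA).2 -- wrong direction? g a - g yhat ≤ |...| 
          calc g (a i) y - g (yhat i) y ≤ |g (a i) y - g (yhat i) y| := le_abs_self _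
            _ ≤ K * |a i - yhat i| := hA
            _ ≤ K * Δ := mul_le_mul_of_nonneg_left habs hK
        have h2 : g (a i + Δ) y - g (yhat i) y ≤ K * Δ := by
          have habs : |a i + Δ - yhat i| ≤ Δ := by
            rw [abs_le]; constructor <;> [linarith [hle_b i]; linarith [ha_le i]]
          calc g (a i + Δ) y - g (yhat i) y ≤ |g (a i + Δ) y - g (yhat i) y| := le_abs_self _
            _ ≤ K * |a i + Δ - yhat i| := hB
            _ ≤ K * Δ := mul_le_mul_of_nonneg_left habs hK
        have hM := hnonneg y hy i
        nlinarith [hlam0 i, hlam1 i, mul_nonneg hM (hlam0 i),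
          mul_nonneg hM (sub_nonneg.mpr (hlam1 i))]
      calc (∑ i, (M y i * (1 - lam i) * g (a i) y + M y i * lam i * g (a i + Δ) y))
          ≤ ∑ i, M y i * (g (yhat i) y + K * Δ) := Finset.sum_le_sum fun i _ => hterm i
        _ = (∑ i, M y i * g (yhat i) y) + (∑ i, M y i) * (K * Δ) := by
            rw [Finset.sum_mul, ← Finset.sum_add_distrib]
            apply Finset.sum_congr rfl; intro i _; ring
        _ = (∑ i, M y i * g (yhat i) y) + K * Δ := by rw [hsum y hy, one_mul]
    calc (∑ y ∈ Y, P y * ∑ i : Fin (m + m),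
        (Fin.addCases (fun i => M y i * (1 - lam i)) (fun i => M y i * lam i) : Fin (m+m) → ℝ) i *
          g ((Fin.addCases (fun i => a i) (fun i => a i + Δ) : Fin (m+m) → ℝ) i) y)
        ≤ ∑ y ∈ Y, P y * ((∑ i, M y i * g (yhat i) y) + K * Δ) :=
          Finset.sum_le_sum fun y hy => mul_le_mul_of_nonneg_left (key y hy) (hP0 y hy)
      _ = (∑ y ∈ Y, P y * ∑ i, M y i * g (yhat i) y) + K * Δ := by
          simp_rw [mul_add]
          rw [Finset.sum_add_distrib, ← Finset.sum_mul, hP1, one_mul]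
end

section
/- Let ε > 0 and let k ≥ 2 be an integer. Let v ∈ ℝ^k be a vector with v_i ≥ 0 for all i and v_i ≤ e^ε·v_j for all indices i, j (i.e., v satisfies the ε-DP column constraints). Then v is a nonnegative combination of staircase columns: there exist nonnegative coefficients (c_S), indexed by the subsets S of {1, ..., k} with ∅ ⊊ S ⊊ {1, ..., k}, such that v = Σ_S c_S·w_S, where w_S ∈ ℝ^k is the vector with (w_S)_i = e^ε for i ∈ S and (w_S)_i = 1 for i ∉ S. -/
/-- Telescoping lemma: summing increments of a monotone `D` below an achieved level `t`
gives `t`. -/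
lemma stmt10_tele (D : ℕ → ℝ) (hD : Monotone D) (hD0 : D 0 = 0) (t : ℝ) (K J : ℕ)
    (hJ : J < K) (ht : D (J + 1) = t) :
    ∑ n ∈ Finset.range K, (if D (n + 1) ≤ t then D (n + 1) - D n else 0) = t := by
  have key : ∀ n ∈ Finset.range K,
      (if D (n + 1) ≤ t then D (n + 1) - D n else 0)
        = min (D (n + 1)) t - min (D n) t := by
    intro n _
    by_cases hn : D (n + 1) ≤ t
    · rw [if_pos hn, min_eq_left hn, min_eq_left ((hD (Nat.le_succ n)).trans hn)]
    · rw [if_neg hn]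
      push_neg at hn
      have h1 : t ≤ D n := by
        rcases le_or_gt (J + 1) n with h | h
        · exact ht ▸ hD h
        · exact absurd (ht ▸ hD (Nat.succ_le_succ (Nat.lt_succ_iff.mp h)))
            (not_le.mpr hn)
      rw [min_eq_right hn.le, min_eq_right h1]
      ring
  rw [Finset.sum_congr rfl key, Finset.sum_range_sub (fun n => min (D n) t)]
  have h0 : 0 ≤ t := by
    have := hD (Nat.zero_le (J + 1))
    rw [hD0, ht] at this
    exact this
  have hK : t ≤ D K := ht ▸ hD hJ
  rw [hD0, min_eq_right hK, min_eq_left h0]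
  ring

/-- For `ε > 0` and `k ≥ 2`, every nonnegative vector `v ∈ ℝ^k`
satisfying the `ε`-DP column constraints `v i ≤ e^ε · v j` is a nonnegative combination
of the staircase columns `w_S` (with `(w_S) i = e^ε` for `i ∈ S` and `1` otherwise),
indexed by the proper nonempty subsets `S` of `{1, ..., k}`. -/
theorem stmt_10
    (ε : ℝ) (hε : 0 < ε)
    (k : ℕ) (hk : 2 ≤ k)
    (v : Fin k → ℝ)
    (hv0 : ∀ i, 0 ≤ v i)
    (hvdp : ∀ i j, v i ≤ Real.exp ε * v j) :
    ∃ c : Finset (Fin k) → ℝ,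
      (∀ S, 0 ≤ c S) ∧
      ∀ i, v i =
        ∑ S ∈ Finset.univ.filter
            (fun S : Finset (Fin k) => S.Nonempty ∧ S ≠ Finset.univ),
          c S * (if i ∈ S then Real.exp ε else 1) := by
  have hk0 : 0 < k := by omega
  haveI : NeZero k := ⟨by omega⟩
  have hexp1 : (1 : ℝ) < Real.exp ε := by
    have := Real.exp_lt_exp.mpr hε
    rwa [Real.exp_zero] at this
  set E : ℝ := Real.exp ε - 1 with hEdef
  have hE0 : 0 < E := by rw [hEdef]; linarith
  have hne : (Finset.univ : Finset (Fin k)).Nonempty := Finset.univ_nonempty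
  set m : ℝ := Finset.univ.inf' hne v with hmdef
  obtain ⟨i₀, -, hi₀⟩ := Finset.exists_mem_eq_inf' hne v
  have hmv : m = v i₀ := hmdef.trans hi₀
  have hm_le : ∀ i, m ≤ v i := fun i => Finset.inf'_le _ (Finset.mem_univ i)
  have hm0 : 0 ≤ m := hmv ▸ hv0 i₀
  set g : Fin k → ℝ := fun i => (v i - m) / E with hgdef
  have hg0 : ∀ i, 0 ≤ g i := fun i => div_nonneg (by linarith [hm_le i]) hE0.le
  have hgm : ∀ i, g i ≤ m := by
    intro i
    have h1 : v i ≤ Real.exp ε * m := by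
      rw [hmv]; exact hvdp i i₀
    show (v i - m) / E ≤ m
    rw [div_le_iff₀ hE0, hEdef]
    nlinarith
  have hgi₀ : g i₀ = 0 := by
    show (v i₀ - m) / E = 0
    rw [hmv, sub_self, zero_div]
  set σ : Equiv.Perm (Fin k) := Tuple.sort g with hσdef
  have hmono : Monotone (g ∘ σ) := Tuple.monotone_sort g
  have hklt : k - 1 < k := by omega
  set D : ℕ → ℝ := fun n =>
    if n = 0 then 0 else g (σ ⟨min (n - 1) (k - 1), by omega⟩) with hDdef
  have hD0 : D 0 = 0 := by show (if 0 = 0 then _ else _) = (0:ℝ); simp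
  have hDpos : ∀ (n : ℕ) (hn : n ≠ 0), D n = g (σ ⟨min (n - 1) (k - 1), by omega⟩) := by
    intro n hn
    show (if n = 0 then _ else _) = _
    rw [if_neg hn]
  have hDval : ∀ j : Fin k, D (j.val + 1) = g (σ j) := by
    intro j
    rw [hDpos (j.val + 1) (Nat.succ_ne_zero _)]
    have h2 : (⟨min (j.val + 1 - 1) (k - 1), by omega⟩ : Fin k) = j := by
      apply Fin.ext
      simp only
      have := j.isLt
      omega
    rw [h2]
  have hDmono : Monotone D := by
    intro a b hab
    rcases Nat.eq_zero_or_pos b with hb | hb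
    · have : a = 0 := by omega
      subst this; subst hb; exact le_rfl
    rcases Nat.eq_zero_or_pos a with ha | ha
    · subst ha
      rw [hD0, hDpos b (by omega)]
      exact hg0 _
    · rw [hDpos a (by omega), hDpos b (by omega)]
      exact hmono (by rw [Fin.le_def]; simp only; omega)
  have hDk : D k = g (σ ⟨k - 1, hklt⟩) := by
    rw [hDpos k (by omega)]
    congr 2
    exact Fin.ext (by simp)
  set G : ℝ := D k with hGdef
  have hGmax : ∀ i, g i ≤ G := by
    intro i
    have h2 : σ.symm i ≤ ⟨k - 1, hklt⟩ := by
      rw [Fin.le_def]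
      have := (σ.symm i).isLt
      simp only
      omega
    calc g i = (g ∘ σ) (σ.symm i) := by simp
    _ ≤ (g ∘ σ) ⟨k - 1, hklt⟩ := hmono h2
    _ = G := hDk.symm
  have hGm : G ≤ m := by rw [hDk]; exact hgm _
  have hG0 : 0 ≤ G := le_trans (hg0 i₀) (hGmax i₀)
  set x : ℝ := (m - G) / (Real.exp ε + 1) with hxdef
  have hx0 : 0 ≤ x := div_nonneg (by linarith) (by linarith)
  set F : Finset (Finset (Fin k)) := Finset.univ.filter
      (fun S : Finset (Fin k) => S.Nonempty ∧ S ≠ Finset.univ) with hFdef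
  set S₀ : Finset (Fin k) := {i₀} with hS₀def
  obtain ⟨i₁, hi₁⟩ : ∃ i₁ : Fin k, i₁ ≠ i₀ := by
    refine Fintype.exists_ne_of_one_lt_card ?_ i₀
    simp only [Fintype.card_fin]
    omega
  have hS₀F : S₀ ∈ F := by
    rw [hFdef, Finset.mem_filter]
    refine ⟨Finset.mem_univ _, Finset.singleton_nonempty _, ?_⟩
    intro h
    have : i₁ ∈ S₀ := h ▸ Finset.mem_univ i₁
    rw [hS₀def, Finset.mem_singleton] at this
    exact hi₁ this
  have hS₀cF : S₀ᶜ ∈ F := by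
    rw [hFdef, Finset.mem_filter]
    refine ⟨Finset.mem_univ _, ⟨i₁, by simp [hS₀def, hi₁]⟩, ?_⟩
    intro h
    have : i₀ ∈ S₀ᶜ := h ▸ Finset.mem_univ i₀
    simp [hS₀def] at this
  set d : Fin k → ℝ := fun j => D (j.val + 1) - D j.val with hddef
  have hd0 : ∀ j, 0 ≤ d j := fun j => sub_nonneg.mpr (hDmono (Nat.le_succ _))
  set A : Fin k → Finset (Fin k) := fun j =>
    Finset.univ.filter (fun i => D (j.val + 1) ≤ g i) with hAdef
  have hAmem : ∀ (j : Fin k) (i : Fin k), i ∈ A j ↔ D (j.val + 1) ≤ g i := by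
    intro j i
    rw [hAdef]
    simp
  have hAne : ∀ j, (A j).Nonempty := by
    intro j
    exact ⟨σ j, (hAmem j (σ j)).mpr (le_of_eq (hDval j))⟩
  have hAd : ∀ j, A j ∉ F → d j = 0 := by
    intro j hj
    have hAu : A j = Finset.univ := by
      by_contra hau
      exact hj (by rw [hFdef, Finset.mem_filter]; exact ⟨Finset.mem_univ _, hAne j, hau⟩)
    have h1 : D (j.val + 1) ≤ 0 := by
      have : i₀ ∈ A j := hAu ▸ Finset.mem_univ i₀
      rw [hAmem] at this
      rw [← hgi₀]
      exact this
    have h2 : 0 ≤ D j.val := hD0 ▸ hDmono (Nat.zero_le _)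
    show D (j.val + 1) - D j.val = 0
    have h3 := sub_nonneg.mpr (hDmono (Nat.le_succ j.val))
    linarith
  refine ⟨fun S => (∑ j ∈ Finset.univ.filter (fun j => A j = S), d j)
      + ((if S = S₀ then x else 0) + (if S = S₀ᶜ then x else 0)), ?_, ?_⟩
  · intro S
    show 0 ≤ (∑ j ∈ Finset.univ.filter (fun j => A j = S), d j)
      + ((if S = S₀ then x else 0) + (if S = S₀ᶜ then x else 0))
    have h1 : 0 ≤ ∑ j ∈ Finset.univ.filter (fun j => A j = S), d j :=
      Finset.sum_nonneg fun j _ => hd0 j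
    have h2 : (0:ℝ) ≤ (if S = S₀ then x else 0) := by positivity
    have h3 : (0:ℝ) ≤ (if S = S₀ᶜ then x else 0) := by positivity
    linarith
  · intro i
    set e : Finset (Fin k) → ℝ := fun S => if i ∈ S then Real.exp ε else 1 with hedef
    have heval : ∀ S, e S = if i ∈ S then Real.exp ε else 1 := fun S => rfl
    show v i = ∑ S ∈ F, ((∑ j ∈ Finset.univ.filter (fun j => A j = S), d j)
      + ((if S = S₀ then x else 0) + (if S = S₀ᶜ then x else 0))) * e S
    have hsplit : ∑ S ∈ F, ((∑ j ∈ Finset.univ.filter (fun j => A j = S), d j)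
        + ((if S = S₀ then x else 0) + (if S = S₀ᶜ then x else 0))) * e S
        = (∑ S ∈ F, (∑ j ∈ Finset.univ.filter (fun j => A j = S), d j) * e S)
          + ((∑ S ∈ F, (if S = S₀ then x else 0) * e S)
            + (∑ S ∈ F, (if S = S₀ᶜ then x else 0) * e S)) := by
      rw [← Finset.sum_add_distrib, ← Finset.sum_add_distrib]
      exact Finset.sum_congr rfl fun S _ => by ring
    have hx1 : (∑ S ∈ F, (if S = S₀ then x else 0) * e S) = x * e S₀ := by
      rw [Finset.sum_congr rfl (fun S _ => by
        rw [ite_mul, zero_mul] :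
        ∀ S ∈ F, (if S = S₀ then x else 0) * e S = if S = S₀ then x * e S else 0)]
      rw [Finset.sum_ite_eq' F S₀ (fun S => x * e S), if_pos hS₀F]
    have hx2 : (∑ S ∈ F, (if S = S₀ᶜ then x else 0) * e S) = x * e S₀ᶜ := by
      rw [Finset.sum_congr rfl (fun S _ => by
        rw [ite_mul, zero_mul] :
        ∀ S ∈ F, (if S = S₀ᶜ then x else 0) * e S = if S = S₀ᶜ then x * e S else 0)]
      rw [Finset.sum_ite_eq' F S₀ᶜ (fun S => x * e S), if_pos hS₀cF]
    -- the main fiberwise sum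
    have hmain : (∑ S ∈ F, (∑ j ∈ Finset.univ.filter (fun j => A j = S), d j) * e S)
        = ∑ j : Fin k, d j * e (A j) := by
      have h1 : ∀ S ∈ F, (∑ j ∈ Finset.univ.filter (fun j => A j = S), d j) * e S
          = ∑ j ∈ Finset.univ.filter (fun j => A j = S), d j * e (A j) := by
        intro S _
        rw [Finset.sum_mul]
        exact Finset.sum_congr rfl fun j hj => by
          rw [(Finset.mem_filter.mp hj).2]
      rw [Finset.sum_congr rfl h1,
        Finset.sum_fiberwise_eq_sum_filter Finset.univ F A (fun j => d j * e (A j))]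
      rw [Finset.sum_filter]
      refine Finset.sum_congr rfl fun j _ => ?_
      by_cases hj : A j ∈ F
      · rw [if_pos hj]
      · rw [if_neg hj, hAd j hj, zero_mul]
    -- expand e (A j)
    have hexp : ∀ j : Fin k, d j * e (A j)
        = d j + E * (if D (j.val + 1) ≤ g i then d j else 0) := by
      intro j
      by_cases hc : D (j.val + 1) ≤ g i
      · rw [heval, if_pos ((hAmem j i).mpr hc), if_pos hc, hEdef]
        ring
      · rw [heval, if_neg (fun h => hc ((hAmem j i).mp h)), if_neg hc]
        ring
    have hsum1 : ∑ j : Fin k, d j = G := by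
      have h1 : (∑ j : Fin k, d j) = ∑ n ∈ Finset.range k, (D (n + 1) - D n) :=
        Fin.sum_univ_eq_sum_range (fun n => D (n + 1) - D n) k
      rw [h1, Finset.sum_range_sub D k, hD0, sub_zero, hGdef]
    have hsum2 : ∑ j : Fin k, (if D (j.val + 1) ≤ g i then d j else 0) = g i := by
      have h1 : (∑ j : Fin k, (if D (j.val + 1) ≤ g i then d j else 0))
          = ∑ n ∈ Finset.range k,
              (if D (n + 1) ≤ g i then D (n + 1) - D n else 0) :=
        Fin.sum_univ_eq_sum_range
          (fun n => if D (n + 1) ≤ g i then D (n + 1) - D n else 0) k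
      rw [h1]
      refine stmt10_tele D hDmono hD0 (g i) k (σ.symm i).val (σ.symm i).isLt ?_
      rw [hDval (σ.symm i)]
      simp
    have hS₀e : e S₀ + e S₀ᶜ = Real.exp ε + 1 := by
      by_cases hc : i ∈ S₀
      · rw [heval, heval, if_pos hc, if_neg (fun h => (Finset.mem_compl.mp h) hc)]
      · rw [heval, heval, if_neg hc, if_pos (Finset.mem_compl.mpr hc)]
        ring
    have h5 : x * e S₀ + x * e S₀ᶜ = m - G := by
      rw [← mul_add, hS₀e, hxdef]
      field_simp
    have h6 : E * g i = v i - m := by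
      show E * ((v i - m) / E) = v i - m
      field_simp
    rw [hsplit, hx1, hx2, hmain,
      Finset.sum_congr rfl (fun j (_ : j ∈ Finset.univ) => hexp j),
      Finset.sum_add_distrib, ← Finset.mul_sum, hsum1, hsum2, h5]
    linarith [h6]
end
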